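/- Let 0 < q < 1 and let x ∈ ℂ with q < |x| < q^{−1} and x ≠ −1. Then (q;q)_∞² · θ(x;q) / ((−q;q)_∞² · θ(−x;q)) = (1 − x)/(1 + x) + 2·Σ_{k=1}^∞ (−q)^k · (x^{−k} − x^k)/(1 + q^k), the series converging absolutely. -/

import Mathlib

/-- The infinite q-Pochhammer symbol `(a;q)_∞ = Π_{k≥0} (1 − a q^k)`. -/
noncomputable def qPoch (q : ℝ) (a : ℂ) : ℂ := ∏' k : ℕ, (1 - a * (q : ℂ) ^ k)

/-- The theta function `θ(x;q) = (x;q)_∞ (q/x;q)_∞`. -/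
noncomputable def theta (q : ℝ) (x : ℂ) : ℂ := qPoch q x * qPoch q ((q : ℂ) / x)

namespace QL

noncomputable def Lsum (q : ℝ) (a : ℂ) : ℂ := ∑' n : ℕ, Complex.log (1 - a * (q : ℂ) ^ (n + 1))

variable {q : ℝ}

lemma normQ (hq0 : 0 < q) : ‖(q : ℂ)‖ = q := by
  simp [abs_of_pos hq0]

lemma normQpow (hq0 : 0 < q) (n : ℕ) : ‖(q : ℂ) ^ n‖ = q ^ n := by
  rw [norm_pow, normQ hq0]

lemma log_term_bound {w : ℂ} (hw : ‖w‖ ≤ 1 / 2) :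
    ‖Complex.log (1 - w)‖ ≤ 3 / 2 * ‖w‖ := by
  have := Complex.norm_log_one_add_half_le_self (z := -w) (by simpa using hw)
  simpa [sub_eq_add_neg] using this

lemma factor_ne_zero {w : ℂ} (hw : ‖w‖ < 1) : 1 - w ≠ 0 := by
  intro h
  have : (1 : ℂ) = w := by linear_combination h
  rw [← this] at hw; simp at hw

lemma summable_log (hq0 : 0 < q) (hq1 : q < 1) {a : ℂ} (ha : ‖a‖ * q < 1) :
    Summable fun n : ℕ => Complex.log (1 - a * (q : ℂ) ^ (n + 1)) := by
  obtain ⟨N, hN⟩ : ∃ N : ℕ, ‖a‖ * q ^ (N + 1) ≤ 1 / 2 := by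
    have h := exists_pow_lt_of_lt_one (by positivity : (0:ℝ) < 1 / (2 * (‖a‖ + 1)))
      hq1
    obtain ⟨N, hN⟩ := h
    refine ⟨N, ?_⟩
    have hq' : q ^ (N + 1) ≤ q ^ N := by
      apply pow_le_pow_of_le_one hq0.le hq1.le; omega
    have h1 : ‖a‖ * q ^ (N + 1) ≤ ‖a‖ * q ^ N := by
      apply mul_le_mul_of_nonneg_left hq' (norm_nonneg _)
    have h2 : ‖a‖ * q ^ N ≤ (‖a‖ + 1) * (1 / (2 * (‖a‖ + 1))) := by
      apply mul_le_mul (by linarith) hN.le (by positivity) (by positivity)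
    have h3 : (‖a‖ + 1) * (1 / (2 * (‖a‖ + 1))) = 1 / 2 := by
      field_simp
    linarith
  rw [← summable_nat_add_iff N]
  apply Summable.of_norm_bounded (g := fun n => 3 / 2 * (‖a‖ * q ^ (N + 1) * q ^ n)) ?_ ?_
  · apply Summable.mul_left
    apply Summable.mul_left
    exact summable_geometric_of_lt_one hq0.le hq1
  · intro n
    have hw : ‖a * (q : ℂ) ^ (n + N + 1)‖ = ‖a‖ * q ^ (n + N + 1) := by
      rw [norm_mul, normQpow hq0]
    have hle : ‖a‖ * q ^ (n + N + 1) ≤ ‖a‖ * q ^ (N + 1) * q ^ n := by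
      have : q ^ (n + N + 1) = q ^ (N + 1) * q ^ n := by ring
      rw [this]; ring_nf; rfl
    have hsmall : ‖a * (q : ℂ) ^ (n + N + 1)‖ ≤ 1 / 2 := by
      rw [hw]
      refine le_trans hle (le_trans ?_ hN)
      have : q ^ n ≤ 1 := pow_le_one₀ hq0.le hq1.le
      exact mul_le_of_le_one_right (by positivity) this
    calc ‖Complex.log (1 - a * (q : ℂ) ^ (n + N + 1))‖
        ≤ 3 / 2 * ‖a * (q : ℂ) ^ (n + N + 1)‖ := log_term_bound hsmall
      _ ≤ 3 / 2 * (‖a‖ * q ^ (N + 1) * q ^ n) := by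
          rw [hw]; nlinarith [hle]


lemma tail_factor_ne (hq0 : 0 < q) (hq1 : q < 1) {a : ℂ} (ha : ‖a‖ * q < 1) (n : ℕ) :
    1 - a * (q : ℂ) ^ (n + 1) ≠ 0 := by
  apply factor_ne_zero
  rw [norm_mul, normQpow hq0]
  have h1 : q ^ (n + 1) = q * q ^ n := by ring
  have h2 : q ^ n ≤ 1 := pow_le_one₀ hq0.le hq1.le
  have := norm_nonneg a
  calc ‖a‖ * q ^ (n + 1) = ‖a‖ * q * q ^ n := by rw [h1]; ring
    _ ≤ ‖a‖ * q * 1 := by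
        apply mul_le_mul_of_nonneg_left h2 (by positivity)
    _ < 1 := by simpa using ha

lemma multipliable_tail (hq0 : 0 < q) (hq1 : q < 1) {a : ℂ} (ha : ‖a‖ * q < 1) :
    Multipliable fun n : ℕ => 1 - a * (q : ℂ) ^ (n + 1) :=
  Complex.multipliable_of_summable_log (summable_log hq0 hq1 ha)

lemma tprod_tail_eq (hq0 : 0 < q) (hq1 : q < 1) {a : ℂ} (ha : ‖a‖ * q < 1) :
    (∏' n : ℕ, (1 - a * (q : ℂ) ^ (n + 1))) = Complex.exp (Lsum q a) := by
  have := Complex.cexp_tsum_eq_tprod (f := fun n => 1 - a * (q : ℂ) ^ (n + 1))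
    (fun n => tail_factor_ne hq0 hq1 ha n)
    (summable_log hq0 hq1 ha)
  exact this.symm

lemma qPoch_Qmul (hq0 : 0 < q) (hq1 : q < 1) {a : ℂ} (ha : ‖a‖ * q < 1) :
    qPoch q ((q : ℂ) * a) = Complex.exp (Lsum q a) := by
  rw [qPoch, ← tprod_tail_eq hq0 hq1 ha]
  exact tprod_congr fun k => by ring_nf

lemma qPoch_Qmul_ne (hq0 : 0 < q) (hq1 : q < 1) {a : ℂ} (ha : ‖a‖ * q < 1) :
    qPoch q ((q : ℂ) * a) ≠ 0 := by
  rw [qPoch_Qmul hq0 hq1 ha]; exact Complex.exp_ne_zero _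

lemma qPoch_shift (hq0 : 0 < q) (hq1 : q < 1) {a : ℂ} (ha : ‖a‖ * q < 1) :
    qPoch q a = (1 - a) * qPoch q ((q : ℂ) * a) := by
  have hm : Multipliable fun n : ℕ => (1 - a * (q : ℂ) ^ (n + 1)) :=
    multipliable_tail hq0 hq1 ha
  have h0 : qPoch q a = (1 - a * (q : ℂ) ^ (0 : ℕ)) * ∏' n : ℕ, (1 - a * (q : ℂ) ^ (n + 1)) :=
    tprod_eq_zero_mul' hm
  rw [h0, tprod_tail_eq hq0 hq1 ha, ← qPoch_Qmul hq0 hq1 ha]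
  norm_num

noncomputable def Efun (q : ℝ) (x : ℂ) : ℂ := qPoch q ((q : ℂ) * x) * qPoch q ((q : ℂ) / x)

lemma Qne (hq0 : 0 < q) : (q : ℂ) ≠ 0 := by
  exact_mod_cast Complex.ofReal_ne_zero.mpr hq0.ne'

lemma norm_fact1 (hq0 : 0 < q) {x : ℂ} (hx2 : ‖x‖ < q⁻¹) : ‖x‖ * q < 1 := by
  have h := mul_lt_mul_of_pos_right hx2 hq0
  rwa [inv_mul_cancel₀ hq0.ne'] at h

lemma norm_fact2 (hq0 : 0 < q) {x : ℂ} (hx0 : x ≠ 0) (hx1 : q < ‖x‖) : ‖x⁻¹‖ * q < 1 := by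
  rw [norm_inv]
  have h0 : 0 < ‖x‖ := norm_pos_iff.2 hx0
  rw [inv_mul_lt_iff₀ h0]; simpa using hx1

lemma theta_decomp (hq0 : 0 < q) (hq1 : q < 1) {x : ℂ} (hx2 : ‖x‖ * q < 1) :
    theta q x = (1 - x) * Efun q x := by
  rw [theta, Efun, qPoch_shift hq0 hq1 hx2]; ring

lemma Efun_ne (hq0 : 0 < q) (hq1 : q < 1) {x : ℂ} (hx0 : x ≠ 0) (hx1 : q < ‖x‖)
    (hx2 : ‖x‖ * q < 1) : Efun q x ≠ 0 := by
  rw [Efun]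
  apply mul_ne_zero (qPoch_Qmul_ne hq0 hq1 hx2)
  rw [div_eq_mul_inv]
  exact qPoch_Qmul_ne hq0 hq1 (norm_fact2 hq0 hx0 hx1)

lemma Efun_one : Efun q 1 = qPoch q (q : ℂ) ^ 2 := by
  rw [Efun, mul_one, div_one, sq]

lemma Efun_neg_one : Efun q (-1) = qPoch q (-(q : ℂ)) ^ 2 := by
  rw [Efun, mul_neg_one, div_neg, div_one, sq]

lemma theta_FE (hq0 : 0 < q) (hq1 : q < 1) {x : ℂ} (hx0 : x ≠ 0)
    (h1 : ‖x‖ * q < 1) (h2 : ‖x⁻¹‖ * q < 1) :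
    (1 - x) * theta q ((q : ℂ) * x) = (1 - x⁻¹) * theta q x := by
  have hQ : (q : ℂ) ≠ 0 := Qne hq0
  have e1 : (q : ℂ) / ((q : ℂ) * x) = x⁻¹ := by field_simp
  have e2 : (q : ℂ) / x = (q : ℂ) * x⁻¹ := by field_simp
  rw [theta, theta, e1, e2, qPoch_shift hq0 hq1 h2, qPoch_shift hq0 hq1 h1]
  ring

lemma theta_Qmul (hq0 : 0 < q) (hq1 : q < 1) {x : ℂ} (hx0 : x ≠ 0) (hne1 : x ≠ 1)
    (h1 : ‖x‖ * q < 1) (h2 : ‖x⁻¹‖ * q < 1) :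
    theta q ((q : ℂ) * x) = -x⁻¹ * theta q x := by
  have h := theta_FE hq0 hq1 hx0 h1 h2
  have hx1 : (1 : ℂ) - x ≠ 0 := sub_ne_zero.2 (Ne.symm hne1)
  have e : (1 - x⁻¹) = -x⁻¹ * (1 - x) := by field_simp; ring
  rw [e] at h
  apply mul_left_cancel₀ hx1
  rw [h]; ring

noncomputable def Tsum (q : ℝ) (x : ℂ) : ℂ :=
  ∑' k : ℕ, (-(q : ℂ)) ^ (k + 1) * (x ^ (-((k : ℤ) + 1)) - x ^ (k + 1)) / (1 + (q : ℂ) ^ (k + 1))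

noncomputable def Sfun (q : ℝ) (x : ℂ) : ℂ := (1 - x) / (1 + x) + 2 * Tsum q x


lemma one_add_Qpow_ne (hq0 : 0 < q) (n : ℕ) : (1 : ℂ) + (q : ℂ) ^ n ≠ 0 := by
  have : (1 : ℂ) + (q : ℂ) ^ n = ((1 + q ^ n : ℝ) : ℂ) := by push_cast; ring
  rw [this]
  exact_mod_cast (by positivity : (0:ℝ) < 1 + q ^ n).ne'

lemma norm_one_add_Qpow (hq0 : 0 < q) (n : ℕ) : ‖(1 : ℂ) + (q : ℂ) ^ n‖ = 1 + q ^ n := by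
  have : (1 : ℂ) + (q : ℂ) ^ n = ((1 + q ^ n : ℝ) : ℂ) := by push_cast; ring
  rw [this, Complex.norm_real]
  exact abs_of_pos (by positivity)

lemma one_add_ne_of_norm_ne {y : ℂ} (hy : ‖y‖ ≠ 1) : (1 : ℂ) + y ≠ 0 := by
  intro h
  have : y = -1 := by linear_combination h
  rw [this] at hy; simp at hy

lemma zpow_neg_nat (x : ℂ) (k : ℕ) : x ^ (-((k : ℤ) + 1)) = (x ^ (k + 1))⁻¹ := by
  rw [show -((k : ℤ) + 1) = -(((k + 1 : ℕ)) : ℤ) by push_cast; ring, zpow_neg, zpow_natCast]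

lemma term_norm_bound (hq0 : 0 < q) {x : ℂ} (hx0 : x ≠ 0) (k : ℕ) :
    ‖(-(q : ℂ)) ^ (k + 1) * (x ^ (-((k : ℤ) + 1)) - x ^ (k + 1)) / (1 + (q : ℂ) ^ (k + 1))‖
      ≤ (q * ‖x‖⁻¹) ^ (k + 1) + (q * ‖x‖) ^ (k + 1) := by
  rw [norm_div, norm_mul, norm_pow, norm_neg, normQ hq0]
  have hd : (1 : ℝ) ≤ ‖(1 : ℂ) + (q : ℂ) ^ (k + 1)‖ := by
    rw [norm_one_add_Qpow hq0]
    nlinarith [pow_pos hq0 (k + 1)]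
  have hnum : ‖x ^ (-((k : ℤ) + 1)) - x ^ (k + 1)‖ ≤ ‖x‖⁻¹ ^ (k + 1) + ‖x‖ ^ (k + 1) := by
    refine le_trans (norm_sub_le _ _) ?_
    rw [zpow_neg_nat, norm_inv, norm_pow, inv_pow]
  calc q ^ (k+1) * ‖x ^ (-((k : ℤ) + 1)) - x ^ (k + 1)‖ / ‖(1 : ℂ) + (q : ℂ) ^ (k + 1)‖
      ≤ q ^ (k+1) * (‖x‖⁻¹ ^ (k + 1) + ‖x‖ ^ (k + 1)) / 1 := by
        apply div_le_div₀ (by positivity) ?_ one_pos hd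
        exact mul_le_mul_of_nonneg_left hnum (by positivity)
    _ = (q * ‖x‖⁻¹) ^ (k + 1) + (q * ‖x‖) ^ (k + 1) := by
        rw [div_one, mul_pow, mul_pow]; ring

lemma summable_pow_succ {c : ℝ} (h0 : 0 ≤ c) (h1 : c < 1) :
    Summable fun k : ℕ => c ^ (k + 1) := by
  have := (summable_geometric_of_lt_one h0 h1).mul_right c
  refine this.congr fun k => ?_
  rw [pow_succ]

lemma Tsum_summable (hq0 : 0 < q) (hq1 : q < 1) {x : ℂ} (hx1 : q < ‖x‖) (hx2 : ‖x‖ < q⁻¹) :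
    Summable (fun k : ℕ =>
      (-(q : ℂ)) ^ (k + 1) * (x ^ (-((k : ℤ) + 1)) - x ^ (k + 1)) / (1 + (q : ℂ) ^ (k + 1))) := by
  have hx0 : x ≠ 0 := by
    intro h; rw [h] at hx1; simp at hx1; linarith
  have hxpos : 0 < ‖x‖ := norm_pos_iff.2 hx0
  have c1 : q * ‖x‖⁻¹ < 1 := by
    rw [mul_inv_lt_iff₀ hxpos, one_mul]; exact hx1
  have c2 : q * ‖x‖ < 1 := by
    have h := mul_lt_mul_of_pos_left hx2 hq0
    rwa [mul_inv_cancel₀ hq0.ne'] at h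
  apply Summable.of_norm_bounded (((summable_pow_succ (by positivity) c1).add
    (summable_pow_succ (by positivity) c2)))
  exact term_norm_bound hq0 hx0

lemma Tsum_one (hq0 : 0 < q) : Tsum q 1 = 0 := by
  rw [Tsum]
  convert tsum_zero with k
  simp

lemma Tsum_neg_one (hq0 : 0 < q) : Tsum q (-1) = 0 := by
  rw [Tsum]
  convert tsum_zero with k
  rw [zpow_neg_nat]
  rcases Nat.even_or_odd (k + 1) with h | h
  · rw [h.neg_one_pow]; norm_num
  · rw [h.neg_one_pow]; norm_num

lemma geom_shift {y : ℂ} (hy : ‖y‖ < 1) :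
    ∑' k : ℕ, y ^ (k + 1) = y * (1 - y)⁻¹ := by
  have h1 : ∀ k : ℕ, y ^ (k + 1) = y * y ^ k := fun k => by rw [pow_succ]; ring
  calc ∑' k : ℕ, y ^ (k + 1) = ∑' k : ℕ, y * y ^ k := by exact tsum_congr h1
    _ = y * ∑' k : ℕ, y ^ k := tsum_mul_left
    _ = y * (1 - y)⁻¹ := by rw [tsum_geometric_of_norm_lt_one hy]

lemma summable_geom_succ {y : ℂ} (hy : ‖y‖ < 1) : Summable fun k : ℕ => y ^ (k + 1) := by
  have := (summable_geometric_of_norm_lt_one hy).mul_right y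
  refine this.congr fun k => ?_
  rw [pow_succ]

lemma S_FE (hq0 : 0 < q) (hq1 : q < 1) {x : ℂ} (hxgt : 1 < ‖x‖) (hx2 : ‖x‖ < q⁻¹) :
    Sfun q ((q : ℂ) * x) = - Sfun q x := by
  have hx0 : x ≠ 0 := by
    intro h; rw [h] at hxgt; simp at hxgt; linarith
  have hxpos : 0 < ‖x‖ := norm_pos_iff.2 hx0
  have hQ : (q : ℂ) ≠ 0 := by exact_mod_cast Complex.ofReal_ne_zero.mpr hq0.ne'
  have hnqx : ‖(q : ℂ) * x‖ = q * ‖x‖ := by rw [norm_mul, normQ hq0]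
  have hqx1 : ‖(q : ℂ) * x‖ < 1 := by
    rw [hnqx]
    have h := mul_lt_mul_of_pos_left hx2 hq0
    rwa [mul_inv_cancel₀ hq0.ne'] at h
  have hqxgt : q < ‖(q : ℂ) * x‖ := by
    rw [hnqx]; nlinarith
  have hxinv : ‖x⁻¹‖ < 1 := by
    rw [norm_inv]
    rw [inv_lt_one_iff₀]; right; exact hxgt
  -- summability
  have hsx := Tsum_summable hq0 hq1 (lt_trans hq1 hxgt) hx2
  have hqinv : (1:ℝ) < q⁻¹ := (one_lt_inv₀ hq0).2 hq1
  have hsqx := Tsum_summable hq0 hq1 hqxgt (lt_trans hqx1 hqinv)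
  -- termwise identity
  have hterm : ∀ k : ℕ,
      ((-(q : ℂ)) ^ (k + 1) * (x ^ (-((k : ℤ) + 1)) - x ^ (k + 1)) / (1 + (q : ℂ) ^ (k + 1)))
      + ((-(q : ℂ)) ^ (k + 1) * (((q : ℂ) * x) ^ (-((k : ℤ) + 1)) - ((q : ℂ) * x) ^ (k + 1))
          / (1 + (q : ℂ) ^ (k + 1)))
      = (-x⁻¹) ^ (k + 1) - (-((q : ℂ) * x)) ^ (k + 1) := by
    intro k
    have hD := one_add_Qpow_ne hq0 (k + 1)
    have hxk : x ^ (k + 1) ≠ 0 := pow_ne_zero _ hx0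
    have hQk : (q : ℂ) ^ (k + 1) ≠ 0 := pow_ne_zero _ hQ
    have e1 : x ^ (-((k : ℤ) + 1)) = (x ^ (k+1))⁻¹ := zpow_neg_nat x k
    have e2 : ((q:ℂ) * x) ^ (-((k : ℤ) + 1)) = ((q:ℂ) ^ (k+1) * x ^ (k+1))⁻¹ := by
      rw [zpow_neg_nat, mul_pow]
    have e3 : (-(q:ℂ)) ^ (k + 1) = (-1 : ℂ) ^ (k+1) * (q:ℂ) ^ (k+1) := by rw [neg_pow]
    have e4 : (-x⁻¹) ^ (k + 1) = (-1 : ℂ) ^ (k+1) * (x ^ (k+1))⁻¹ := by rw [neg_pow, inv_pow]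
    have e5 : (-((q:ℂ) * x)) ^ (k + 1) = (-1 : ℂ) ^ (k+1) * ((q:ℂ) ^ (k+1) * x ^ (k+1)) := by
      rw [neg_pow, mul_pow]
    have e6 : ((q:ℂ) * x) ^ (k + 1) = (q:ℂ) ^ (k+1) * x ^ (k+1) := mul_pow _ _ _
    rw [e1, e2, e3, e4, e5, e6]
    set a := x ^ (k+1) with ha
    set d := (q:ℂ) ^ (k+1) with hd
    set s := (-1 : ℂ) ^ (k+1) with hs
    field_simp
    ring
  have htsum : Tsum q x + Tsum q ((q : ℂ) * x)
      = (∑' k : ℕ, (-x⁻¹) ^ (k + 1)) - ∑' k : ℕ, (-((q : ℂ) * x)) ^ (k + 1) := by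
    rw [Tsum, Tsum, ← Summable.tsum_add hsx hsqx,
      ← Summable.tsum_sub (summable_geom_succ (by rwa [norm_neg]))
        (summable_geom_succ (by rwa [norm_neg]))]
    exact tsum_congr fun k => by rw [← hterm k]
  have hg1 : ∑' k : ℕ, (-x⁻¹) ^ (k + 1) = (-x⁻¹) * (1 - -x⁻¹)⁻¹ :=
    geom_shift (by rwa [norm_neg])
  have hg2 : ∑' k : ℕ, (-((q : ℂ) * x)) ^ (k + 1) = (-((q : ℂ) * x)) * (1 - -((q : ℂ) * x))⁻¹ :=
    geom_shift (by rwa [norm_neg])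
  -- nonvanishing denominators
  have hne1 : (1 : ℂ) + x ≠ 0 := one_add_ne_of_norm_ne (by linarith)
  have hne2 : (1 : ℂ) + (q : ℂ) * x ≠ 0 := one_add_ne_of_norm_ne (by linarith)
  have hne3 : (1 : ℂ) + x⁻¹ ≠ 0 := one_add_ne_of_norm_ne (by linarith)
  have key : Sfun q x + Sfun q ((q : ℂ) * x) = 0 := by
    rw [Sfun, Sfun]
    have hT : Tsum q x + Tsum q ((q : ℂ) * x)
        = (-x⁻¹) * (1 - -x⁻¹)⁻¹ - (-((q : ℂ) * x)) * (1 - -((q : ℂ) * x))⁻¹ := by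
      rw [htsum, hg1, hg2]
    have e1 : ((1:ℂ) - -x⁻¹) = 1 + x⁻¹ := by ring
    have e2 : ((1:ℂ) - -((q : ℂ) * x)) = 1 + (q : ℂ) * x := by ring
    rw [e1, e2] at hT
    have haux : (1 - x) / (1 + x) + (1 - (q : ℂ) * x) / (1 + (q : ℂ) * x)
        + 2 * ((-x⁻¹) * (1 + x⁻¹)⁻¹ - (-((q : ℂ) * x)) * (1 + (q : ℂ) * x)⁻¹) = 0 := by
      have e : (-x⁻¹) * (1 + x⁻¹)⁻¹ = -(1 + x)⁻¹ := by
        rw [show (1 : ℂ) + x⁻¹ = (1 + x) * x⁻¹ by field_simp; ring]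
        rw [mul_inv, inv_inv]
        field_simp
      rw [e]
      have hne2' : (1 : ℂ) + x * (q : ℂ) ≠ 0 := by rwa [mul_comm]
      field_simp
      ring
    linear_combination 2 * hT + haux
  linear_combination key

lemma diff_log_term (hq0 : 0 < q) (hq1 : q < 1) (m : ℕ) {z : ℂ} (hz : ‖z‖ * q ^ (m + 1) < 1) :
    DifferentiableAt ℂ (fun w : ℂ => Complex.log (1 - w * (q : ℂ) ^ (m + 1))) z := by
  have hf : DifferentiableAt ℂ (fun w : ℂ => 1 - w * (q : ℂ) ^ (m + 1)) z :=
    (differentiableAt_const 1).sub (differentiableAt_id.mul_const _)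
  have hnorm : ‖z * (q : ℂ) ^ (m + 1)‖ < 1 := by
    rw [norm_mul, normQpow hq0]; exact hz
  have hmem : (1 - z * (q : ℂ) ^ (m + 1)) ∈ Complex.slitPlane := by
    apply Complex.mem_slitPlane_iff.2
    left
    have h1 : (1 - z * (q : ℂ) ^ (m + 1)).re = 1 - (z * (q : ℂ) ^ (m + 1)).re := by
      simp [Complex.sub_re]
    rw [h1]
    have h2 : (z * (q : ℂ) ^ (m + 1)).re ≤ ‖z * (q : ℂ) ^ (m + 1)‖ := Complex.re_le_norm _
    linarith
  exact (Complex.differentiableAt_log hmem).comp z hf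

lemma Lsum_diffAt (hq0 : 0 < q) (hq1 : q < 1) {a : ℂ} (ha : ‖a‖ * q < 1) :
    DifferentiableAt ℂ (Lsum q) a := by
  have haq : ‖a‖ < q⁻¹ := by
    have h := mul_lt_mul_of_pos_right ha (inv_pos.2 hq0)
    rwa [mul_assoc, mul_inv_cancel₀ hq0.ne', mul_one, one_mul] at h
  set R : ℝ := (‖a‖ + q⁻¹) / 2 with hRdef
  have hR1 : ‖a‖ < R := by rw [hRdef]; linarith
  have hR0 : 0 < R := lt_of_le_of_lt (norm_nonneg a) hR1
  have hR2 : R < q⁻¹ := by rw [hRdef]; linarith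
  have hRq : R * q < 1 := by
    have h := mul_lt_mul_of_pos_right hR2 hq0
    rwa [inv_mul_cancel₀ hq0.ne'] at h
  obtain ⟨N, hN⟩ := exists_pow_lt_of_lt_one
    (show (0:ℝ) < 1 / (2 * (R + 1)) by positivity) hq1
  have hNb : R * q ^ (N + 1) ≤ 1 / 2 := by
    have h1 : q ^ (N + 1) ≤ q ^ N := by
      apply pow_le_pow_of_le_one hq0.le hq1.le; omega
    have h2 : R * q ^ N ≤ (R + 1) * (1 / (2 * (R + 1))) := by
      apply mul_le_mul (by linarith) hN.le (by positivity) (by positivity)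
    have h3 : (R + 1) * (1 / (2 * (R + 1))) = 1 / 2 := by field_simp
    nlinarith [pow_pos hq0 N, pow_pos hq0 (N+1)]
  set s : Set ℂ := Metric.ball (0 : ℂ) R with hsdef
  have hs : IsOpen s := Metric.isOpen_ball
  have ha_mem : a ∈ s := by rw [hsdef, mem_ball_zero_iff]; exact hR1
  have hz_norm : ∀ z ∈ s, ‖z‖ < R := fun z hz => by
    rwa [hsdef, mem_ball_zero_iff] at hz
  -- tail function
  set g2 : ℂ → ℂ := fun z => ∑' n : ℕ, Complex.log (1 - z * (q : ℂ) ^ ((n + N) + 1)) with hg2def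
  set g1 : ℂ → ℂ := fun z => ∑ i ∈ Finset.range N, Complex.log (1 - z * (q : ℂ) ^ (i + 1))
    with hg1def
  have hsummand_diff : ∀ (m : ℕ) (z : ℂ), z ∈ s →
      DifferentiableAt ℂ (fun w : ℂ => Complex.log (1 - w * (q : ℂ) ^ (m + 1))) z := by
    intro m z hz
    apply diff_log_term hq0 hq1
    have h1 : q ^ (m + 1) ≤ q := by
      calc q ^ (m + 1) ≤ q ^ 1 := by
            apply pow_le_pow_of_le_one hq0.le hq1.le; omega
        _ = q := pow_one q
    have h2 : ‖z‖ * q ^ (m + 1) ≤ ‖z‖ * q :=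
      mul_le_mul_of_nonneg_left h1 (norm_nonneg z)
    have h3 : ‖z‖ * q < R * q := mul_lt_mul_of_pos_right (hz_norm z hz) hq0
    linarith
  have hg2_diff : DifferentiableOn ℂ g2 s := by
    apply TendstoLocallyUniformlyOn.differentiableOn (φ := Filter.atTop)
      (F := fun (i : ℕ) (z : ℂ) =>
        ∑ n ∈ Finset.range i, Complex.log (1 - z * (q : ℂ) ^ ((n + N) + 1)))
    · apply TendstoUniformlyOn.tendstoLocallyUniformlyOn
      apply tendstoUniformlyOn_tsum_nat
        (u := fun n : ℕ => 3 / 2 * (R * q ^ (N + 1) * q ^ n))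
      · apply Summable.mul_left
        apply Summable.mul_left
        exact summable_geometric_of_lt_one hq0.le hq1
      · intro n z hz
        have hw : ‖z * (q : ℂ) ^ ((n + N) + 1)‖ = ‖z‖ * q ^ ((n + N) + 1) := by
          rw [norm_mul, normQpow hq0]
        have hle : ‖z‖ * q ^ ((n + N) + 1) ≤ R * q ^ (N + 1) * q ^ n := by
          have e : q ^ ((n + N) + 1) = q ^ (N + 1) * q ^ n := by ring
          rw [e, ← mul_assoc]
          apply mul_le_mul_of_nonneg_right ?_ (pow_nonneg hq0.le n)
          exact mul_le_mul_of_nonneg_right (hz_norm z hz).le (pow_nonneg hq0.le (N+1))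
        have hsmall : ‖z * (q : ℂ) ^ ((n + N) + 1)‖ ≤ 1 / 2 := by
          rw [hw]
          have : q ^ n ≤ 1 := pow_le_one₀ hq0.le hq1.le
          nlinarith [pow_pos hq0 (N + 1), mul_pos hR0 (pow_pos hq0 (N+1))]
        calc ‖Complex.log (1 - z * (q : ℂ) ^ ((n + N) + 1))‖
            ≤ 3 / 2 * ‖z * (q : ℂ) ^ ((n + N) + 1)‖ := log_term_bound hsmall
          _ ≤ 3 / 2 * (R * q ^ (N + 1) * q ^ n) := by rw [hw]; linarith
    · apply Filter.Eventually.of_forall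
      intro i z hz
      exact (DifferentiableAt.fun_sum fun n _ =>
        hsummand_diff (n + N) z hz).differentiableWithinAt
    · exact hs
  have hg1_diff : DifferentiableOn ℂ g1 s := by
    intro z hz
    exact (DifferentiableAt.fun_sum fun i _ => hsummand_diff i z hz).differentiableWithinAt
  have hsplit : ∀ z ∈ s, Lsum q z = g1 z + g2 z := by
    intro z hz
    have hsum : Summable fun n : ℕ => Complex.log (1 - z * (q : ℂ) ^ (n + 1)) := by
      apply summable_log hq0 hq1
      have := hz_norm z hz
      nlinarith
    rw [Lsum, hg1def, hg2def]
    exact (hsum.sum_add_tsum_nat_add N).symm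
  have htotal : DifferentiableOn ℂ (Lsum q) s := by
    apply DifferentiableOn.congr (hg1_diff.add hg2_diff) hsplit
  exact htotal.differentiableAt (hs.mem_nhds ha_mem)

lemma Efun_diffAt (hq0 : 0 < q) (hq1 : q < 1) {x : ℂ} (hx1 : q < ‖x‖) (hx2 : ‖x‖ < q⁻¹) :
    DifferentiableAt ℂ (Efun q) x := by
  have hx0 : x ≠ 0 := by
    intro h; rw [h] at hx1; simp at hx1; linarith
  have hq2 : q * q < ‖x‖ := by nlinarith
  -- first factor
  have h1 : DifferentiableAt ℂ (fun z : ℂ => qPoch q ((q : ℂ) * z)) x := by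
    have heq : (fun z : ℂ => qPoch q ((q : ℂ) * z)) =ᶠ[nhds x]
        (fun z : ℂ => Complex.exp (Lsum q z)) := by
      apply Filter.eventuallyEq_of_mem
        ((Metric.isOpen_ball (x := (0:ℂ)) (ε := q⁻¹)).mem_nhds (by
          rw [mem_ball_zero_iff]; push_cast; norm_cast))
      intro z hz
      rw [mem_ball_zero_iff] at hz
      apply qPoch_Qmul hq0 hq1
      have h := mul_lt_mul_of_pos_right hz hq0
      rwa [inv_mul_cancel₀ hq0.ne'] at h
    rw [Filter.EventuallyEq.differentiableAt_iff heq]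
    exact Complex.differentiable_exp.differentiableAt.comp x (Lsum_diffAt hq0 hq1 (by
      have h := mul_lt_mul_of_pos_right hx2 hq0
      rwa [inv_mul_cancel₀ hq0.ne'] at h))
  -- second factor
  have h2 : DifferentiableAt ℂ (fun z : ℂ => qPoch q ((q : ℂ) / z)) x := by
    have hopen : IsOpen {z : ℂ | q * q < ‖z‖} :=
      isOpen_lt continuous_const continuous_norm
    have hcond : ∀ z : ℂ, q * q < ‖z‖ → ‖(q : ℂ) / z‖ * q < 1 := by
      intro z hzn
      have hz0 : z ≠ 0 := by
        intro h; rw [h] at hzn; simp at hzn; nlinarith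
      have hzpos : 0 < ‖z‖ := norm_pos_iff.2 hz0
      rw [norm_div, normQ hq0, div_mul_eq_mul_div, div_lt_one hzpos]
      nlinarith
    have heq : (fun z : ℂ => qPoch q ((q : ℂ) / z)) =ᶠ[nhds x]
        (fun z : ℂ => (1 - (q : ℂ) / z) * Complex.exp (Lsum q ((q : ℂ) / z))) := by
      apply Filter.eventuallyEq_of_mem (hopen.mem_nhds hq2)
      intro z hz
      have hc := hcond z hz
      show qPoch q ((q : ℂ) / z) = (1 - (q : ℂ) / z) * Complex.exp (Lsum q ((q : ℂ) / z))
      rw [qPoch_shift hq0 hq1 hc, qPoch_Qmul hq0 hq1 hc]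
    rw [Filter.EventuallyEq.differentiableAt_iff heq]
    have hdiv : DifferentiableAt ℂ (fun z : ℂ => (q : ℂ) / z) x := by
      apply DifferentiableAt.div (differentiableAt_const _) differentiableAt_id hx0
    apply DifferentiableAt.mul
    · exact (differentiableAt_const 1).sub hdiv
    · exact (Complex.differentiable_exp.differentiableAt.comp x
        ((Lsum_diffAt hq0 hq1 (hcond x hq2)).comp x hdiv))
  exact h1.mul h2

lemma Tsum_diffAt (hq0 : 0 < q) (hq1 : q < 1) {x : ℂ} (hx1 : q < ‖x‖) (hx2 : ‖x‖ < q⁻¹) :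
    DifferentiableAt ℂ (Tsum q) x := by
  have hx0 : x ≠ 0 := by
    intro h; rw [h] at hx1; simp at hx1; linarith
  set r : ℝ := (q + ‖x‖) / 2 with hrdef
  set R : ℝ := (‖x‖ + q⁻¹) / 2 with hRdef
  have hr1 : q < r := by rw [hrdef]; linarith
  have hr2 : r < ‖x‖ := by rw [hrdef]; linarith
  have hr0 : 0 < r := lt_trans hq0 hr1
  have hR1 : ‖x‖ < R := by rw [hRdef]; linarith
  have hR2 : R < q⁻¹ := by rw [hRdef]; linarith
  have hR0 : 0 < R := lt_of_le_of_lt (norm_nonneg x) hR1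
  have hc1 : q * r⁻¹ < 1 := by
    rw [mul_inv_lt_iff₀ hr0, one_mul]; exact hr1
  have hc2 : q * R < 1 := by
    have h := mul_lt_mul_of_pos_left hR2 hq0
    rwa [mul_inv_cancel₀ hq0.ne'] at h
  set s : Set ℂ := {z : ℂ | r < ‖z‖ ∧ ‖z‖ < R} with hsdef
  have hs : IsOpen s :=
    (isOpen_lt continuous_const continuous_norm).inter
      (isOpen_lt continuous_norm continuous_const)
  have hx_mem : x ∈ s := ⟨hr2, hR1⟩
  have hdiff : DifferentiableOn ℂ (fun z : ℂ => ∑' k : ℕ,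
      (-(q : ℂ)) ^ (k + 1) * (z ^ (-((k : ℤ) + 1)) - z ^ (k + 1)) / (1 + (q : ℂ) ^ (k + 1))) s := by
    apply TendstoLocallyUniformlyOn.differentiableOn (φ := Filter.atTop)
      (F := fun (i : ℕ) (z : ℂ) => ∑ k ∈ Finset.range i,
        (-(q : ℂ)) ^ (k + 1) * (z ^ (-((k : ℤ) + 1)) - z ^ (k + 1)) / (1 + (q : ℂ) ^ (k + 1)))
    · apply TendstoUniformlyOn.tendstoLocallyUniformlyOn
      apply tendstoUniformlyOn_tsum_nat
        (u := fun k : ℕ => (q * r⁻¹) ^ (k + 1) + (q * R) ^ (k + 1))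
      · exact (summable_pow_succ (by positivity) hc1).add
          (summable_pow_succ (by positivity) hc2)
      · intro k z hz
        obtain ⟨hz1, hz2⟩ := hz
        have hz0 : z ≠ 0 := by
          intro h; rw [h] at hz1; simp at hz1; linarith
        have hzpos : 0 < ‖z‖ := norm_pos_iff.2 hz0
        refine le_trans (term_norm_bound hq0 hz0 k) ?_
        apply add_le_add
        · apply pow_le_pow_left₀ (by positivity)
          apply mul_le_mul_of_nonneg_left ?_ hq0.le
          exact inv_anti₀ hr0 hz1.le
        · apply pow_le_pow_left₀ (by positivity)
          exact mul_le_mul_of_nonneg_left hz2.le hq0.le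
    · apply Filter.Eventually.of_forall
      intro i z hz
      apply DifferentiableAt.differentiableWithinAt
      apply DifferentiableAt.fun_sum
      intro k _
      have hz0 : z ≠ 0 := by
        intro h; rw [h] at hz; simp [hsdef] at hz; linarith [hz.1]
      apply DifferentiableAt.div_const
      apply DifferentiableAt.const_mul
      apply DifferentiableAt.sub
      · exact differentiableAt_zpow.2 (Or.inl hz0)
      · exact differentiableAt_pow _
    · exact hs
  exact (hdiff.differentiableAt (hs.mem_nhds hx_mem))

noncomputable def Cq (q : ℝ) : ℂ := qPoch q (q : ℂ) ^ 2 * (qPoch q (-(q : ℂ)) ^ 2)⁻¹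
noncomputable def Dhat (q : ℝ) (x : ℂ) : ℂ :=
  (1 - x) * Efun q (-x) + 2 * ((1 + x) * Efun q (-x) * Tsum q x) - Cq q * ((1 - x) * Efun q x)
noncomputable def hfun (q : ℝ) (x : ℂ) : ℂ := -(dslope (Dhat q) 1 x) / Efun q x


/-- the open annulus -/
def Aset (q : ℝ) : Set ℂ := {x : ℂ | q < ‖x‖ ∧ ‖x‖ < q⁻¹}

lemma Aset_open : IsOpen (Aset q) :=
  (isOpen_lt continuous_const continuous_norm).inter
    (isOpen_lt continuous_norm continuous_const)

lemma Aset_ne_zero (hq0 : 0 < q) {x : ℂ} (hx : x ∈ Aset q) : x ≠ 0 := by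
  intro h; rw [h] at hx; obtain ⟨h1, _⟩ := hx; simp at h1; linarith

lemma norm_mul_q_lt (hq0 : 0 < q) {x : ℂ} (hx : ‖x‖ < q⁻¹) : ‖x‖ * q < 1 := by
  have h := mul_lt_mul_of_pos_right hx hq0
  rwa [inv_mul_cancel₀ hq0.ne'] at h

lemma norm_inv_mul_q_lt (hq0 : 0 < q) {x : ℂ} (hx0 : x ≠ 0) (hx : q < ‖x‖) :
    ‖x⁻¹‖ * q < 1 := by
  have hxpos : 0 < ‖x‖ := norm_pos_iff.2 hx0
  rw [norm_inv, inv_mul_lt_iff₀ hxpos]; simpa using hx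

lemma one_mem_Aset (hq0 : 0 < q) (hq1 : q < 1) : (1 : ℂ) ∈ Aset q := by
  constructor <;> simp [Aset]
  · exact hq1
  · exact (one_lt_inv₀ hq0).2 hq1

lemma neg_one_mem_Aset (hq0 : 0 < q) (hq1 : q < 1) : (-1 : ℂ) ∈ Aset q := by
  constructor <;> simp [Aset]
  · exact hq1
  · exact (one_lt_inv₀ hq0).2 hq1

lemma neg_mem_Aset {x : ℂ} (hx : x ∈ Aset q) : -x ∈ Aset q := by
  obtain ⟨h1, h2⟩ := hx; exact ⟨by rwa [norm_neg], by rwa [norm_neg]⟩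

lemma qPoch_negq_ne (hq0 : 0 < q) (hq1 : q < 1) : qPoch q (-(q : ℂ)) ≠ 0 := by
  have h : -(q : ℂ) = (q : ℂ) * (-1) := by ring
  rw [h]
  apply qPoch_Qmul_ne hq0 hq1
  rw [norm_neg, norm_one, one_mul]; exact hq1

lemma theta_ne (hq0 : 0 < q) (hq1 : q < 1) {x : ℂ} (hx : x ∈ Aset q) (hx1 : x ≠ 1) :
    theta q x ≠ 0 := by
  rw [theta_decomp hq0 hq1 (norm_mul_q_lt hq0 hx.2)]
  exact mul_ne_zero (sub_ne_zero.2 (Ne.symm hx1))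
    (Efun_ne hq0 hq1 (Aset_ne_zero hq0 hx) hx.1 (norm_mul_q_lt hq0 hx.2))

lemma Dhat_diffAt (hq0 : 0 < q) (hq1 : q < 1) {x : ℂ} (hx : x ∈ Aset q) :
    DifferentiableAt ℂ (Dhat q) x := by
  obtain ⟨h1, h2⟩ := hx
  have hEneg : DifferentiableAt ℂ (fun z : ℂ => Efun q (-z)) x := by
    have := (Efun_diffAt hq0 hq1 (x := -x) (by rwa [norm_neg]) (by rwa [norm_neg]))
    exact this.comp x differentiableAt_id.neg
  have hE := Efun_diffAt hq0 hq1 h1 h2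
  have hT := Tsum_diffAt hq0 hq1 h1 h2
  unfold Dhat
  apply DifferentiableAt.sub
  apply DifferentiableAt.add
  · exact ((differentiableAt_const _).sub differentiableAt_id).mul hEneg
  · exact (((differentiableAt_const _).add differentiableAt_id).mul hEneg |>.mul hT).const_mul _
  · exact (((differentiableAt_const _).sub differentiableAt_id).mul hE).const_mul _

lemma Dhat_one (hq0 : 0 < q) : Dhat q 1 = 0 := by
  rw [Dhat, Tsum_one hq0]; ring

lemma Dhat_neg_one (hq0 : 0 < q) (hq1 : q < 1) : Dhat q (-1) = 0 := by
  rw [Dhat, Tsum_neg_one hq0, Cq]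
  simp only [neg_neg]
  rw [Efun_one, Efun_neg_one]
  have h : qPoch q (-(q : ℂ)) ^ 2 ≠ 0 := pow_ne_zero _ (qPoch_negq_ne hq0 hq1)
  have h' := qPoch_negq_ne hq0 hq1
  field_simp
  ring

lemma Dhat_eq (hq0 : 0 < q) (hq1 : q < 1) {x : ℂ} (hx : x ∈ Aset q) (hxm : x ≠ -1) :
    Dhat q x = theta q (-x) * Sfun q x - Cq q * theta q x := by
  have hd1 : theta q (-x) = (1 + x) * Efun q (-x) := by
    rw [theta_decomp hq0 hq1 (by rw [norm_neg]; exact norm_mul_q_lt hq0 hx.2)]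
    ring_nf
  have hd2 : theta q x = (1 - x) * Efun q x := theta_decomp hq0 hq1 (norm_mul_q_lt hq0 hx.2)
  have hne : (1 : ℂ) + x ≠ 0 := by
    intro h
    apply hxm
    linear_combination h
  rw [Dhat, hd1, hd2, Sfun]
  field_simp

lemma Dhat_FE (hq0 : 0 < q) (hq1 : q < 1) {x : ℂ} (hgt : 1 < ‖x‖) (hlt : ‖x‖ < q⁻¹) :
    Dhat q ((q : ℂ) * x) * x = - Dhat q x := by
  have hx0 : x ≠ 0 := by
    intro h; rw [h] at hgt; simp at hgt; linarith
  have hxA : x ∈ Aset q := ⟨lt_trans hq1 hgt, hlt⟩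
  have hnormqx : ‖(q : ℂ) * x‖ = q * ‖x‖ := by rw [norm_mul, normQ hq0]
  have hqx1 : ‖(q : ℂ) * x‖ < 1 := by
    rw [hnormqx]
    have h := mul_lt_mul_of_pos_left hlt hq0
    rwa [mul_inv_cancel₀ hq0.ne'] at h
  have hqxA : (q : ℂ) * x ∈ Aset q := by
    constructor
    · rw [hnormqx]; nlinarith
    · exact lt_trans hqx1 ((one_lt_inv₀ hq0).2 hq1)
  have hxne1 : x ≠ 1 := by
    intro h; rw [h] at hgt; simp at hgt
  have hxnem1 : x ≠ -1 := by
    intro h; rw [h] at hgt; simp at hgt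
  have hqxnem1 : (q : ℂ) * x ≠ -1 := by
    intro h
    have : ‖(q : ℂ) * x‖ = 1 := by rw [h]; simp
    linarith [hqx1, this.symm.le]
  have e1 := Dhat_eq hq0 hq1 hqxA hqxnem1
  have e2 := Dhat_eq hq0 hq1 hxA hxnem1
  have hth1 : theta q ((q : ℂ) * x) = -x⁻¹ * theta q x :=
    theta_Qmul hq0 hq1 hx0 hxne1 (norm_mul_q_lt hq0 hlt) (norm_inv_mul_q_lt hq0 hx0 hxA.1)
  have hth2 : theta q (-((q : ℂ) * x)) = x⁻¹ * theta q (-x) := by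
    have hmx0 : -x ≠ 0 := neg_ne_zero.2 hx0
    have hmxne1 : -x ≠ 1 := by
      intro h
      apply hxnem1
      linear_combination -h
    have h := theta_Qmul hq0 hq1 hmx0 hmxne1 (x := -x)
      (by rw [norm_neg]; exact norm_mul_q_lt hq0 hlt)
      (by rw [norm_inv, norm_neg, ← norm_inv]; exact norm_inv_mul_q_lt hq0 hx0 hxA.1)
    have e : (q : ℂ) * -x = -((q : ℂ) * x) := by ring
    rw [e] at h
    rw [h]
    field_simp
  have hS := S_FE hq0 hq1 hgt hlt
  rw [e1, e2, hth1, hth2, hS]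
  field_simp
  ring

lemma theta_mul_h (hq0 : 0 < q) (hq1 : q < 1) {x : ℂ} (hx : x ∈ Aset q) :
    theta q x * hfun q x = Dhat q x := by
  by_cases hx1 : x = 1
  · subst hx1
    rw [theta_decomp hq0 hq1 (norm_mul_q_lt hq0 hx.2), Dhat_one hq0]
    ring
  · have hE := Efun_ne hq0 hq1 (Aset_ne_zero hq0 hx) hx.1 (norm_mul_q_lt hq0 hx.2)
    rw [hfun, dslope_of_ne _ hx1, slope_def_field, Dhat_one hq0,
      theta_decomp hq0 hq1 (norm_mul_q_lt hq0 hx.2)]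
    have hne : x - 1 ≠ 0 := sub_ne_zero.2 hx1
    field_simp
    ring

lemma hfun_diffOn (hq0 : 0 < q) (hq1 : q < 1) : DifferentiableOn ℂ (hfun q) (Aset q) := by
  have hDdiff : DifferentiableOn ℂ (Dhat q) (Aset q) :=
    fun z hz => (Dhat_diffAt hq0 hq1 hz).differentiableWithinAt
  intro x hx
  apply DifferentiableAt.differentiableWithinAt
  have hE := Efun_diffAt hq0 hq1 hx.1 hx.2
  have hEne := Efun_ne hq0 hq1 (Aset_ne_zero hq0 hx) hx.1 (norm_mul_q_lt hq0 hx.2)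
  have hds : DifferentiableAt ℂ (dslope (Dhat q) 1) x := by
    by_cases hx1 : x = 1
    · subst hx1
      have hA : AnalyticAt ℂ (Dhat q) 1 :=
        hDdiff.analyticAt ((Aset_open).mem_nhds (one_mem_Aset hq0 hq1))
      obtain ⟨p, hp⟩ := hA
      exact (hp.has_fpower_series_dslope_fslope).analyticAt.differentiableAt
    · rw [← differentiableWithinAt_univ] at *
      exact (differentiableWithinAt_dslope_of_ne hx1).2
        ((Dhat_diffAt hq0 hq1 hx).differentiableWithinAt)
  exact (hds.neg).div hE hEne

lemma hfun_FE (hq0 : 0 < q) (hq1 : q < 1) {x : ℂ} (hgt : 1 < ‖x‖) (hlt : ‖x‖ < q⁻¹) :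
    hfun q ((q : ℂ) * x) = hfun q x := by
  have hx0 : x ≠ 0 := by
    intro h; rw [h] at hgt; simp at hgt; linarith
  have hxA : x ∈ Aset q := ⟨lt_trans hq1 hgt, hlt⟩
  have hxne1 : x ≠ 1 := by intro h; rw [h] at hgt; simp at hgt
  have hnormqx : ‖(q : ℂ) * x‖ = q * ‖x‖ := by rw [norm_mul, normQ hq0]
  have hqx1 : ‖(q : ℂ) * x‖ < 1 := by
    rw [hnormqx]
    have h := mul_lt_mul_of_pos_left hlt hq0
    rwa [mul_inv_cancel₀ hq0.ne'] at h
  have hqxA : (q : ℂ) * x ∈ Aset q := by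
    constructor
    · rw [hnormqx]; nlinarith
    · exact lt_trans hqx1 ((one_lt_inv₀ hq0).2 hq1)
  have hqxne1 : (q : ℂ) * x ≠ 1 := by
    intro h
    have : ‖(q : ℂ) * x‖ = 1 := by rw [h]; simp
    linarith [hqx1]
  have h1 := theta_mul_h hq0 hq1 hqxA
  have h2 := theta_mul_h hq0 hq1 hxA
  have hFE := Dhat_FE hq0 hq1 hgt hlt
  have hth : theta q ((q : ℂ) * x) = -x⁻¹ * theta q x :=
    theta_Qmul hq0 hq1 hx0 hxne1 (norm_mul_q_lt hq0 hlt) (norm_inv_mul_q_lt hq0 hx0 hxA.1)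
  have hthne : theta q x ≠ 0 := theta_ne hq0 hq1 hxA hxne1
  -- θ(qx)·x·h(qx) = Dhat(qx)·x = -Dhat x = -θx·hx ; θ(qx)x = -θx
  have hcalc : (-theta q x) * hfun q ((q : ℂ) * x) = (-theta q x) * hfun q x := by
    have e1 : theta q ((q : ℂ) * x) * x = -theta q x := by
      rw [hth]; field_simp
    calc (-theta q x) * hfun q ((q : ℂ) * x)
        = (theta q ((q : ℂ) * x) * hfun q ((q : ℂ) * x)) * x := by rw [← e1]; ring
      _ = Dhat q ((q : ℂ) * x) * x := by rw [h1]
      _ = - Dhat q x := hFE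
      _ = - (theta q x * hfun q x) := by rw [h2]
      _ = (-theta q x) * hfun q x := by ring
  exact mul_left_cancel₀ (neg_ne_zero.2 hthne) hcalc

lemma hfun_neg_one (hq0 : 0 < q) (hq1 : q < 1) : hfun q (-1) = 0 := by
  have h := theta_mul_h hq0 hq1 (neg_one_mem_Aset hq0 hq1)
  rw [Dhat_neg_one hq0 hq1] at h
  have hthne : theta q (-1) ≠ 0 := theta_ne hq0 hq1 (neg_one_mem_Aset hq0 hq1) (by norm_num)
  exact (mul_eq_zero.1 h).resolve_left hthne

noncomputable def mfun (q : ℝ) (z : ℂ) : ℤ := ⌊Real.log ‖z‖ / (-Real.log q)⌋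
noncomputable def Hfun (q : ℝ) (z : ℂ) : ℂ := hfun q ((q : ℂ) ^ (mfun q z) * z)

lemma norm_zpow_mul (hq0 : 0 < q) (n : ℤ) (z : ℂ) :
    ‖(q : ℂ) ^ n * z‖ = q ^ n * ‖z‖ := by
  rw [norm_mul, norm_zpow, normQ hq0]

lemma mfun_mem (hq0 : 0 < q) (hq1 : q < 1) {z : ℂ} (hz : z ≠ 0) :
    1 ≤ q ^ (mfun q z) * ‖z‖ ∧ q ^ (mfun q z) * ‖z‖ < q⁻¹ := by
  set t : ℝ := Real.log ‖z‖ with ht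
  have hlam : 0 < -Real.log q := by
    have := Real.log_neg hq0 hq1
    linarith
  set lam : ℝ := -Real.log q with hlamdef
  have hn : mfun q z = ⌊t / lam⌋ := rfl
  have hzpos : 0 < ‖z‖ := norm_pos_iff.2 hz
  have hexp : q ^ (mfun q z) * ‖z‖
      = Real.exp (Real.log q * (mfun q z) + t) := by
    rw [Real.exp_add, ← Real.exp_log hzpos, ht]
    congr 1
    rw [← Real.rpow_intCast q (mfun q z), Real.rpow_def_of_pos hq0]
  have hfl : (⌊t / lam⌋ : ℝ) * lam ≤ t := by
    rw [← le_div_iff₀ hlam]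
    exact Int.floor_le _
  have hfu : t < ((⌊t / lam⌋ : ℝ) + 1) * lam := by
    rw [← div_lt_iff₀ hlam]
    exact Int.lt_floor_add_one _
  constructor
  · rw [hexp, ← Real.exp_zero, Real.exp_le_exp]
    rw [hn]
    have : Real.log q * (⌊t / lam⌋ : ℝ) = -((⌊t / lam⌋ : ℝ) * lam) := by
      rw [hlamdef]; ring
    push_cast
    nlinarith [hfl]
  · rw [hexp]
    have hq' : q⁻¹ = Real.exp lam := by
      rw [hlamdef, ← Real.log_inv, Real.exp_log (inv_pos.2 hq0)]
    rw [hq', Real.exp_lt_exp, hn]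
    push_cast
    nlinarith [hfu]

lemma Hkey (hq0 : 0 < q) (hq1 : q < 1) {z : ℂ} (hz : z ≠ 0) {k : ℤ}
    (h1 : q < q ^ k * ‖z‖) (h2 : q ^ k * ‖z‖ < q⁻¹) :
    Hfun q z = hfun q ((q : ℂ) ^ k * z) := by
  obtain ⟨hm1, hm2⟩ := mfun_mem hq0 hq1 (q := q) hz
  set n : ℤ := mfun q z with hn
  have hzpos : 0 < ‖z‖ := norm_pos_iff.2 hz
  have hqk : (0:ℝ) < q ^ k := zpow_pos hq0 k
  have hqn : (0:ℝ) < q ^ n := zpow_pos hq0 n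
  have hiq : (0:ℝ) < q⁻¹ := inv_pos.2 hq0
  -- k = n or k = n + 1
  have hkn : k = n ∨ k = n + 1 := by
    have e : q ^ (n - 1) = q⁻¹ * q ^ n := by
      rw [zpow_sub₀ hq0.ne', zpow_one]; ring
    have h3 : q ^ k * ‖z‖ < (q⁻¹ * q ^ n) * ‖z‖ := by nlinarith
    have hup : q ^ k < q ^ (n - 1) := by
      rw [e]; exact lt_of_mul_lt_mul_right h3 hzpos.le
    have h10 := (zpow_lt_zpow_iff_right_of_lt_one₀ hq0 hq1).1 hup
    -- h10 : n - 1 < k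
    have h4 : ‖z‖ < q⁻¹ / q ^ n := by
      rw [lt_div_iff₀ hqn]; nlinarith
    have e2 : q⁻¹ / q ^ n = q ^ (-1 - n) := by
      rw [zpow_sub₀ hq0.ne', zpow_neg, zpow_one]
    rw [e2] at h4
    have h5 : q ^ k * ‖z‖ < q ^ k * q ^ (-1 - n) :=
      (mul_lt_mul_iff_right₀ hqk).2 h4
    have h6 : q ^ (1:ℤ) < q ^ (k + (-1 - n)) := by
      rw [zpow_add₀ hq0.ne', zpow_one]
      calc q < q ^ k * ‖z‖ := h1
        _ < _ := h5
    have h8 := (zpow_lt_zpow_iff_right_of_lt_one₀ hq0 hq1).1 h6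
    -- h8 : k + (-1 - n) < 1
    omega
  rcases hkn with rfl | rfl
  · rfl
  · have hQ0 : (q : ℂ) ≠ 0 := by
      exact_mod_cast Complex.ofReal_ne_zero.mpr hq0.ne'
    have hsplit : (q : ℂ) ^ (n + 1) * z = (q : ℂ) * ((q : ℂ) ^ n * z) := by
      rw [zpow_add₀ hQ0, zpow_one]; ring
    have hwgt : 1 < ‖(q : ℂ) ^ n * z‖ := by
      rw [norm_zpow_mul hq0]
      rcases lt_or_eq_of_le hm1 with h | h
      · exact h
      · exfalso
        have hs : q ^ n * ‖z‖ = 1 := h.symm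
        have : q ^ (n + 1) * ‖z‖ = q := by
          rw [zpow_add₀ hq0.ne', zpow_one]
          nlinarith [hs]
        rw [this] at h1
        exact lt_irrefl _ h1
    have hwlt : ‖(q : ℂ) ^ n * z‖ < q⁻¹ := by rw [norm_zpow_mul hq0]; exact hm2
    rw [Hfun, ← hn, hsplit]
    exact (hfun_FE hq0 hq1 hwgt hwlt).symm

lemma Hfun_diffAt (hq0 : 0 < q) (hq1 : q < 1) {z : ℂ} (hz : z ≠ 0) :
    DifferentiableAt ℂ (Hfun q) z := by
  set n : ℤ := mfun q z with hn
  obtain ⟨hm1, hm2⟩ := mfun_mem hq0 hq1 (q := q) hz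
  set U : Set ℂ := {w : ℂ | q < ‖(q : ℂ) ^ n * w‖ ∧ ‖(q : ℂ) ^ n * w‖ < q⁻¹} with hU
  have hUopen : IsOpen U := by
    have hcont : Continuous fun w : ℂ => ‖(q : ℂ) ^ n * w‖ :=
      (continuous_const.mul continuous_id).norm
    exact (isOpen_lt continuous_const hcont).inter (isOpen_lt hcont continuous_const)
  have hzU : z ∈ U := by
    constructor
    · rw [norm_zpow_mul hq0]; linarith
    · rw [norm_zpow_mul hq0]; exact hm2
  have hEq : ∀ w ∈ U, Hfun q w = hfun q ((q : ℂ) ^ n * w) := by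
    intro w hw
    have hw0 : w ≠ 0 := by
      intro h
      rw [h] at hw
      obtain ⟨hw1, _⟩ := hw
      rw [mul_zero] at hw1
      simp at hw1
      linarith
    obtain ⟨hw1, hw2⟩ := hw
    exact Hkey hq0 hq1 hw0 (by rwa [norm_zpow_mul hq0] at hw1)
      (by rwa [norm_zpow_mul hq0] at hw2)
  have hdiff2 : DifferentiableAt ℂ (fun w : ℂ => hfun q ((q : ℂ) ^ n * w)) z := by
    have hmem : ((q : ℂ) ^ n * z) ∈ Aset q := by
      constructor
      · rw [norm_zpow_mul hq0]; linarith
      · rw [norm_zpow_mul hq0]; exact hm2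
    have hd : DifferentiableAt ℂ (hfun q) ((q : ℂ) ^ n * z) :=
      (hfun_diffOn hq0 hq1).differentiableAt (Aset_open.mem_nhds hmem)
    exact hd.comp z ((differentiableAt_const _).mul differentiableAt_id)
  apply hdiff2.congr_of_eventuallyEq
  exact Filter.eventuallyEq_of_mem (hUopen.mem_nhds hzU) hEq

lemma Hfun_bound (hq0 : 0 < q) (hq1 : q < 1) :
    ∃ M : ℝ, ∀ z : ℂ, z ≠ 0 → ‖Hfun q z‖ ≤ M := by
  have hqinv : (1:ℝ) < q⁻¹ := (one_lt_inv₀ hq0).2 hq1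
  set c : ℝ := (1 + q⁻¹) / 2 with hc
  have hc1 : 1 < c := by rw [hc]; linarith
  have hc2 : c < q⁻¹ := by rw [hc]; linarith
  have hqc : q * c < 1 := by
    have h := mul_lt_mul_of_pos_left hc2 hq0
    rwa [mul_inv_cancel₀ hq0.ne'] at h
  have hqclt : q < q * c := by nlinarith
  set K : Set ℂ := {w : ℂ | q * c ≤ ‖w‖ ∧ ‖w‖ ≤ c} with hK
  have hKcompact : IsCompact K := by
    rw [Metric.isCompact_iff_isClosed_bounded]
    constructor
    · exact (isClosed_le continuous_const continuous_norm).inter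
        (isClosed_le continuous_norm continuous_const)
    · apply Bornology.IsBounded.subset (Metric.isBounded_closedBall (x := (0:ℂ)) (r := c))
      intro w hw
      rw [Metric.mem_closedBall, dist_zero_right]
      exact hw.2
  have hKsub : K ⊆ Aset q := by
    intro w hw
    exact ⟨lt_of_lt_of_le hqclt hw.1, lt_of_le_of_lt hw.2 hc2⟩
  have hcont : ContinuousOn (hfun q) K :=
    ((hfun_diffOn hq0 hq1).continuousOn).mono hKsub
  obtain ⟨M, hM⟩ := hKcompact.exists_bound_of_continuousOn hcont
  refine ⟨M, fun z hz => ?_⟩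
  set n : ℤ := mfun q z with hn
  obtain ⟨hm1, hm2⟩ := mfun_mem hq0 hq1 (q := q) hz
  have hnorm_y : ‖(q : ℂ) ^ n * z‖ = q ^ n * ‖z‖ := norm_zpow_mul hq0 n z
  by_cases hyc : ‖(q : ℂ) ^ n * z‖ ≤ c
  · have hyK : ((q : ℂ) ^ n * z) ∈ K := by
      constructor
      · rw [hnorm_y]
        calc q * c ≤ 1 := by nlinarith
          _ ≤ q ^ n * ‖z‖ := hm1
      · exact hyc
    exact hM _ hyK
  · push_neg at hyc
    have hQ0 : (q : ℂ) ≠ 0 := by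
      exact_mod_cast Complex.ofReal_ne_zero.mpr hq0.ne'
    have hy1 : 1 < q ^ n * ‖z‖ := by
      rw [hnorm_y] at hyc; linarith
    have hkey := Hkey hq0 hq1 hz (k := n + 1)
      (by
        rw [zpow_add₀ hq0.ne', zpow_one]
        have : q * (q ^ n * ‖z‖) > q * 1 := by
          apply mul_lt_mul_of_pos_left hy1 hq0
        nlinarith)
      (by
        rw [zpow_add₀ hq0.ne', zpow_one]
        have h1 : q * (q ^ n * ‖z‖) < q * q⁻¹ := mul_lt_mul_of_pos_left hm2 hq0
        rw [mul_inv_cancel₀ hq0.ne'] at h1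
        calc q ^ n * q * ‖z‖ = q * (q ^ n * ‖z‖) := by ring
          _ < 1 := h1
          _ < q⁻¹ := hqinv)
    rw [hkey]
    apply hM
    constructor
    · rw [norm_zpow_mul hq0, zpow_add₀ hq0.ne', zpow_one]
      rw [hnorm_y] at hyc
      calc q * c ≤ q * (q ^ n * ‖z‖) := by nlinarith
        _ = q ^ n * q * ‖z‖ := by ring
    · rw [norm_zpow_mul hq0, zpow_add₀ hq0.ne', zpow_one]
      have h1 : q * (q ^ n * ‖z‖) < q * q⁻¹ := mul_lt_mul_of_pos_left hm2 hq0
      rw [mul_inv_cancel₀ hq0.ne'] at h1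
      have : q ^ n * q * ‖z‖ = q * (q ^ n * ‖z‖) := by ring
      rw [this]
      linarith

lemma hfun_zero_on_Aset (hq0 : 0 < q) (hq1 : q < 1) {x : ℂ} (hx : x ∈ Aset q) :
    hfun q x = 0 := by
  obtain ⟨M, hM⟩ := Hfun_bound hq0 hq1
  -- removable singularity at 0
  set L : ℂ := Filter.limUnder (nhdsWithin 0 {(0:ℂ)}ᶜ) (Hfun q) with hL
  set F : ℂ → ℂ := Function.update (Hfun q) 0 L with hF
  have hball : Metric.ball (0:ℂ) 1 ∈ nhds (0:ℂ) := Metric.ball_mem_nhds _ one_pos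
  have hdiff_punct : DifferentiableOn ℂ (Hfun q) (Metric.ball (0:ℂ) 1 \ {0}) := by
    intro w hw
    have hw0 : w ≠ 0 := hw.2
    exact (Hfun_diffAt hq0 hq1 hw0).differentiableWithinAt
  have hbdd : BddAbove (norm ∘ Hfun q '' (Metric.ball (0:ℂ) 1 \ {0})) := by
    refine ⟨M, ?_⟩
    rintro r ⟨w, hw, rfl⟩
    exact hM w hw.2
  have hFball : DifferentiableOn ℂ F (Metric.ball (0:ℂ) 1) :=
    Complex.differentiableOn_update_limUnder_of_bddAbove hball hdiff_punct hbdd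
  have hFdiff : Differentiable ℂ F := by
    intro w
    by_cases hw0 : w = 0
    · subst hw0
      exact hFball.differentiableAt hball
    · have heq : F =ᶠ[nhds w] Hfun q := by
        apply Filter.eventuallyEq_of_mem (isOpen_compl_singleton.mem_nhds hw0)
        intro v hv
        exact Function.update_of_ne hv _ _
      exact (Hfun_diffAt hq0 hq1 hw0).congr_of_eventuallyEq heq
  have hFbound : ∀ w : ℂ, ‖F w‖ ≤ max M ‖L‖ := by
    intro w
    by_cases hw0 : w = 0
    · subst hw0
      rw [hF, Function.update_self]
      exact le_max_right _ _
    · rw [hF, Function.update_of_ne hw0]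
      exact le_trans (hM w hw0) (le_max_left _ _)
  have hconst := hFdiff.apply_eq_apply_of_bounded (by
    apply Bornology.IsBounded.subset (Metric.isBounded_closedBall (x := (0:ℂ)) (r := max M ‖L‖))
    rintro r ⟨w, rfl⟩
    rw [Metric.mem_closedBall, dist_zero_right]
    exact hFbound w) x (-1)
  have hx0 : x ≠ 0 := by
    intro h
    rw [h] at hx
    obtain ⟨h1, _⟩ := hx
    simp at h1; linarith
  have hxup : F x = Hfun q x := Function.update_of_ne hx0 _ _
  have hm1up : F (-1) = Hfun q (-1) := Function.update_of_ne (by norm_num) _ _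
  have hHx : Hfun q x = hfun q x := by
    have h := Hkey hq0 hq1 hx0 (k := 0)
      (by rw [zpow_zero, one_mul]; exact hx.1)
      (by rw [zpow_zero, one_mul]; exact hx.2)
    rw [h, zpow_zero, one_mul]
  have hHm1 : Hfun q (-1) = hfun q (-1) := by
    have h := Hkey hq0 hq1 (show (-1:ℂ) ≠ 0 by norm_num) (k := 0)
      (by rw [zpow_zero, one_mul]; simpa using hq1)
      (by rw [zpow_zero, one_mul]; simpa using (one_lt_inv₀ hq0).2 hq1)
    rw [h, zpow_zero, one_mul]
  rw [← hHx, ← hxup, hconst, hm1up, hHm1, hfun_neg_one hq0 hq1]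

end QL

/-- For `q < |x| < q⁻¹`, `x ≠ −1`:
`(q;q)_∞² θ(x;q)/((−q;q)_∞² θ(−x;q)) = (1−x)/(1+x) + 2 Σ_{k≥1} (−q)^k (x^{−k} − x^k)/(1+q^k)`,
the series converging absolutely. -/
theorem laurent_expansion_even (q : ℝ) (hq0 : 0 < q) (hq1 : q < 1) (x : ℂ)
    (hx1 : q < ‖x‖) (hx2 : ‖x‖ < q⁻¹) (hxm : x ≠ -1) :
    Summable (fun k : ℕ =>
      (-(q : ℂ)) ^ (k + 1) * (x ^ (-((k : ℤ) + 1)) - x ^ (k + 1)) / (1 + (q : ℂ) ^ (k + 1))) ∧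
    qPoch q (q : ℂ) ^ 2 * theta q x / (qPoch q (-(q : ℂ)) ^ 2 * theta q (-x)) =
      (1 - x) / (1 + x) +
        2 * ∑' k : ℕ,
          (-(q : ℂ)) ^ (k + 1) * (x ^ (-((k : ℤ) + 1)) - x ^ (k + 1)) /
            (1 + (q : ℂ) ^ (k + 1)) := by
  have hx1' : q < ‖x‖ := hx1
  have hx2' : ‖x‖ < q⁻¹ := hx2
  have hxA : x ∈ QL.Aset q := ⟨hx1', hx2'⟩
  constructor
  · exact QL.Tsum_summable hq0 hq1 hx1' hx2'
  · have hh := QL.hfun_zero_on_Aset hq0 hq1 hxA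
    have hD0 : QL.Dhat q x = 0 := by
      have hth := QL.theta_mul_h hq0 hq1 hxA
      rw [hh, mul_zero] at hth
      exact hth.symm
    have heq := QL.Dhat_eq hq0 hq1 hxA hxm
    rw [hD0] at heq
    -- heq : 0 = theta q (-x) * Sfun q x - Cq q * theta q x
    have hb : qPoch q (-(q : ℂ)) ^ 2 ≠ 0 := pow_ne_zero _ (QL.qPoch_negq_ne hq0 hq1)
    have hmxA : -x ∈ QL.Aset q := QL.neg_mem_Aset hxA
    have hmx1 : -x ≠ 1 := by
      intro h
      apply hxm
      linear_combination -h
    have hθ : theta q (-x) ≠ 0 := QL.theta_ne hq0 hq1 hmxA hmx1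
    have hCm : QL.Cq q * qPoch q (-(q : ℂ)) ^ 2 = qPoch q (q : ℂ) ^ 2 := by
      rw [QL.Cq]
      have h' := QL.qPoch_negq_ne hq0 hq1
      field_simp
    have hgoal : qPoch q (q : ℂ) ^ 2 * theta q x /
        (qPoch q (-(q : ℂ)) ^ 2 * theta q (-x)) = QL.Sfun q x := by
      rw [div_eq_iff (mul_ne_zero hb hθ)]
      linear_combination qPoch q (-(q : ℂ)) ^ 2 * heq - theta q x * hCm
    rw [hgoal, QL.Sfun, QL.Tsum]
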